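/- Let C : [0,∞) → 𝒫(ℝ) be admissible, with {(x,h) ∈ ℝ × [0,∞) : x ∈ C(h)} Lebesgue-measurable, each C(h) of finite Lebesgue measure, and ρ[C](x) < ∞ for almost every x. Let Φ : [0,∞) → ℝ be differentiable and convex with Φ(0) = 0 and Φ' ≥ 0, and assume h ↦ Φ'(h)·|C(h)| is Lebesgue integrable on (0,∞). Then equality holds in the layer-cake bound: ∫_ℝ Φ(ρ[C](x)) dx = ∫_0^∞ Φ'(h) |C(h)| dh. -/

import Mathlib

open MeasureTheory Set

/-- Lemma 4.2 (equality case): for admissible families the internal energy equals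
the layer-cake expression. -/
theorem stmt_6 (C : ℝ → Set ℝ)
    (hadm : ∀ h₁ h₂ : ℝ, 0 ≤ h₁ → h₁ ≤ h₂ → C h₂ ⊆ C h₁)
    (hmeas : MeasurableSet {p : ℝ × ℝ | 0 ≤ p.2 ∧ p.1 ∈ C p.2})
    (hfin : ∀ h : ℝ, volume (C h) < ⊤)
    (hρfin : ∀ᵐ x : ℝ, volume {h : ℝ | 0 ≤ h ∧ x ∈ C h} ≠ ⊤)
    (Φ Φ' : ℝ → ℝ)
    (hΦdiff : ∀ x ∈ Ici (0:ℝ), HasDerivWithinAt Φ (Φ' x) (Ici 0) x)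
    (hΦconv : ConvexOn ℝ (Ici 0) Φ)
    (hΦ0 : Φ 0 = 0)
    (hΦ'nn : ∀ x ∈ Ici (0:ℝ), 0 ≤ Φ' x)
    (hint : IntegrableOn (fun h => Φ' h * (volume (C h)).toReal) (Ioi 0)) :
    (∫ x : ℝ, Φ ((volume {h : ℝ | 0 ≤ h ∧ x ∈ C h}).toReal)) =
      ∫ h in Ioi (0:ℝ), Φ' h * (volume (C h)).toReal := by
  classical
  set S : Set (ℝ × ℝ) := {p : ℝ × ℝ | 0 ≤ p.2 ∧ p.1 ∈ C p.2} with hSdef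
  set ψ : ℝ → ℝ := fun h => Φ' (max h 0) with hψdef
  -- Φ' is monotone on [0, ∞) by convexity
  have hΦ'mono : MonotoneOn Φ' (Ici 0) := by
    intro a ha b hb hab
    rcases eq_or_lt_of_le hab with rfl | hlt
    · exact le_rfl
    · exact le_trans (hΦconv.le_slope_of_hasDerivWithinAt ha hb hlt (hΦdiff a ha))
        (hΦconv.slope_le_of_hasDerivWithinAt ha hb hlt (hΦdiff b hb))
  have hψmono : Monotone ψ := fun a b hab =>
    hΦ'mono (le_max_right a 0) (le_max_right b 0) (max_le_max hab le_rfl)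
  have hψnn : ∀ h, 0 ≤ ψ h := fun h => hΦ'nn _ (le_max_right h 0)
  have hψeq : ∀ h : ℝ, 0 ≤ h → ψ h = Φ' h := by
    intro h hh; simp [hψdef, max_eq_left hh]
  have hψmeas : Measurable ψ := hψmono.measurable
  set F : ℝ → ℝ → ENNReal :=
    fun x h => S.indicator (fun p => ENNReal.ofReal (ψ p.2)) (x, h) with hFdef
  have hFmeas : Measurable (Function.uncurry F) := by
    have : Function.uncurry F = S.indicator (fun p => ENNReal.ofReal (ψ p.2)) := rfl
    rw [this]
    exact ((hψmeas.comp measurable_snd).ennreal_ofReal).indicator hmeas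
  have hTmeas : ∀ x : ℝ, MeasurableSet {h : ℝ | 0 ≤ h ∧ x ∈ C h} := by
    intro x
    have : {h : ℝ | 0 ≤ h ∧ x ∈ C h} = Prod.mk x ⁻¹' S := rfl
    rw [this]
    exact hmeas.preimage measurable_prodMk_left
  -- Step 1: for a.e. x, the inner integral over h equals Φ(ρ(x)), and Φ(ρ(x)) ≥ 0
  have key1 : ∀ᵐ x : ℝ, 0 ≤ Φ ((volume {h : ℝ | 0 ≤ h ∧ x ∈ C h}).toReal) ∧
      (∫⁻ h, F x h) = ENNReal.ofReal (Φ ((volume {h : ℝ | 0 ≤ h ∧ x ∈ C h}).toReal)) := by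
    filter_upwards [hρfin] with x hx
    set T := {h : ℝ | 0 ≤ h ∧ x ∈ C h} with hTdef
    set r := (volume T).toReal with hrdef
    have hrnn : 0 ≤ r := ENNReal.toReal_nonneg
    have hTm : MeasurableSet T := hTmeas x
    have hTsub : T ⊆ Icc 0 r := by
      intro t ht
      refine ⟨ht.1, ?_⟩
      have hsub : Icc 0 t ⊆ T := fun s hs => ⟨hs.1, hadm s t hs.1 hs.2 ht.2⟩
      have h1 : volume (Icc (0:ℝ) t) ≤ volume T := measure_mono hsub
      rw [Real.volume_Icc] at h1
      have h2 : t - 0 ≤ r := (ENNReal.ofReal_le_iff_le_toReal hx).mp h1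
      linarith
    have hIsub : Ico 0 r ⊆ T := by
      intro h hh
      by_contra hhT
      have hsub : T ⊆ Ico 0 h := by
        intro t ht
        refine ⟨ht.1, ?_⟩
        by_contra hth
        push_neg at hth
        exact hhT ⟨hh.1, hadm h t hh.1 hth ht.2⟩
      have h1 : volume T ≤ volume (Ico (0:ℝ) h) := measure_mono hsub
      rw [Real.volume_Ico] at h1
      have h2 : r ≤ h - 0 := by
        calc r ≤ (ENNReal.ofReal (h - 0)).toReal :=
              ENNReal.toReal_mono (by simp) h1
          _ = h - 0 := ENNReal.toReal_ofReal (by linarith [hh.1])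
      linarith [hh.2]
    have hae : T =ᵐ[volume] Icc 0 r := by
      rw [MeasureTheory.ae_eq_set]
      constructor
      · have : T \ Icc 0 r = ∅ := diff_eq_empty.mpr hTsub
        rw [this, measure_empty]
      · refine measure_mono_null ?_ (measure_singleton r)
        intro y hy
        rcases eq_or_lt_of_le hy.1.2 with he | hl
        · exact he
        · exact absurd (hIsub ⟨hy.1.1, hl⟩) hy.2
    have hFx : ∀ h, F x h = T.indicator (fun h => ENNReal.ofReal (ψ h)) h := by
      intro h
      by_cases hh : h ∈ T
      · rw [Set.indicator_of_mem hh]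
        exact Set.indicator_of_mem (show (x, h) ∈ S from hh) _
      · rw [Set.indicator_of_notMem hh]
        exact Set.indicator_of_notMem (show (x, h) ∉ S from hh) _
    have hmonoOn : MonotoneOn ψ (Icc 0 r) := fun a _ b _ hab => hψmono hab
    have hint2 : IntegrableOn ψ (Icc 0 r) := hmonoOn.integrableOn_isCompact isCompact_Icc
    have hcont : ContinuousOn Φ (Icc 0 r) := fun t ht =>
      ((hΦdiff t ht.1).continuousWithinAt).mono (fun s hs => hs.1)
    have hderiv : ∀ t ∈ Ioo 0 r, HasDerivWithinAt Φ (ψ t) (Ioi t) t := by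
      intro t ht
      rw [hψeq t ht.1.le]
      exact (hΦdiff t ht.1.le).mono (fun s hs => le_trans ht.1.le (le_of_lt hs))
    have hii : IntervalIntegrable ψ volume 0 r := by
      apply MonotoneOn.intervalIntegrable
      exact fun a _ b _ hab => hψmono hab
    have hΦr : Φ r = ∫ h in Icc 0 r, ψ h := by
      rw [integral_Icc_eq_integral_Ioc, ← intervalIntegral.integral_of_le hrnn,
        intervalIntegral.integral_eq_sub_of_hasDeriv_right_of_le hrnn hcont hderiv hii,
        hΦ0, sub_zero]
    have h8 : (∫⁻ h, F x h) = ENNReal.ofReal (Φ r) := by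
      calc (∫⁻ h, F x h) = ∫⁻ h in T, ENNReal.ofReal (ψ h) := by
            simp_rw [hFx]; exact lintegral_indicator hTm _
        _ = ∫⁻ h in Icc 0 r, ENNReal.ofReal (ψ h) := setLIntegral_congr hae
        _ = ENNReal.ofReal (∫ h in Icc 0 r, ψ h) :=
            (ofReal_integral_eq_lintegral_ofReal hint2
              (ae_of_all _ fun h => hψnn h)).symm
        _ = ENNReal.ofReal (Φ r) := by rw [hΦr]
    exact ⟨hΦr ▸ setIntegral_nonneg measurableSet_Icc (fun h _ => hψnn h), h8⟩
  -- Step 2: for each h, the inner integral over x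
  have key2 : ∀ h : ℝ, (∫⁻ x, F x h) =
      (Ici (0:ℝ)).indicator (fun h => ENNReal.ofReal (ψ h) * volume (C h)) h := by
    intro h
    by_cases hh : 0 ≤ h
    · rw [Set.indicator_of_mem (show h ∈ Ici (0:ℝ) from hh)]
      have hsec : MeasurableSet ((fun x : ℝ => (x, h)) ⁻¹' S) :=
        hmeas.preimage (measurable_prodMk_right)
      have hFx : ∀ x, F x h =
          ((fun x : ℝ => (x, h)) ⁻¹' S).indicator (fun _ => ENNReal.ofReal (ψ h)) x := by
        intro x
        simp only [hFdef]
        by_cases hx : (x, h) ∈ S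
        · rw [Set.indicator_of_mem hx,
            Set.indicator_of_mem (show x ∈ (fun x : ℝ => (x, h)) ⁻¹' S from hx)]
        · rw [Set.indicator_of_notMem hx,
            Set.indicator_of_notMem (show x ∉ (fun x : ℝ => (x, h)) ⁻¹' S from hx)]
      have hpre : ((fun x : ℝ => (x, h)) ⁻¹' S) = C h := by
        ext x; simp [hSdef, hh]
      simp_rw [hFx]
      rw [lintegral_indicator hsec, setLIntegral_const, hpre]
    · rw [Set.indicator_of_notMem (show h ∉ Ici (0:ℝ) from hh)]
      have hFx : ∀ x, F x h = 0 := by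
        intro x
        apply Set.indicator_of_notMem
        intro hx
        exact hh hx.1
      simp_rw [hFx]
      exact lintegral_zero
  have hRHSnn : (0:ℝ) ≤ ∫ h in Ioi (0:ℝ), Φ' h * (volume (C h)).toReal :=
    setIntegral_nonneg measurableSet_Ioi fun h hh =>
      mul_nonneg (hΦ'nn h (le_of_lt (mem_Ioi.mp hh))) ENNReal.toReal_nonneg
  have step2 : (∫⁻ h, ∫⁻ x, F x h) =
      ENNReal.ofReal (∫ h in Ioi (0:ℝ), Φ' h * (volume (C h)).toReal) := by
    calc (∫⁻ h, ∫⁻ x, F x h)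
        = ∫⁻ h, (Ici (0:ℝ)).indicator (fun h => ENNReal.ofReal (ψ h) * volume (C h)) h := by
          simp_rw [key2]
      _ = ∫⁻ h in Ici (0:ℝ), ENNReal.ofReal (ψ h) * volume (C h) :=
          lintegral_indicator measurableSet_Ici _
      _ = ∫⁻ h in Ioi (0:ℝ), ENNReal.ofReal (ψ h) * volume (C h) := by
          rw [restrict_Ioi_eq_restrict_Ici]
      _ = ∫⁻ h in Ioi (0:ℝ), ENNReal.ofReal (Φ' h * (volume (C h)).toReal) := by
          apply setLIntegral_congr_fun measurableSet_Ioi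
          intro h hh
          beta_reduce
          rw [hψeq h (mem_Ioi.mp hh).le, ENNReal.ofReal_mul (hΦ'nn h (mem_Ioi.mp hh).le),
            ENNReal.ofReal_toReal (hfin h).ne]
      _ = ENNReal.ofReal (∫ h in Ioi (0:ℝ), Φ' h * (volume (C h)).toReal) := by
          refine (ofReal_integral_eq_lintegral_ofReal hint ?_).symm
          rw [Filter.EventuallyLE, ae_restrict_iff' measurableSet_Ioi]
          exact ae_of_all _ fun h hh =>
            mul_nonneg (hΦ'nn h (le_of_lt (mem_Ioi.mp hh))) ENNReal.toReal_nonneg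
  -- Tonelli
  have hswap : (∫⁻ x, ∫⁻ h, F x h) = ∫⁻ h, ∫⁻ x, F x h :=
    lintegral_lintegral_swap hFmeas.aemeasurable
  have key3 : (∫⁻ x, ENNReal.ofReal (Φ ((volume {h : ℝ | 0 ≤ h ∧ x ∈ C h}).toReal))) =
      ENNReal.ofReal (∫ h in Ioi (0:ℝ), Φ' h * (volume (C h)).toReal) := by
    rw [← step2, ← hswap]
    exact lintegral_congr_ae (key1.mono fun x hx => hx.2.symm)
  have hnn : 0 ≤ᵐ[volume] fun x => Φ ((volume {h : ℝ | 0 ≤ h ∧ x ∈ C h}).toReal) :=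
    key1.mono fun x hx => hx.1
  have hmeasLHS : AEStronglyMeasurable
      (fun x => Φ ((volume {h : ℝ | 0 ≤ h ∧ x ∈ C h}).toReal)) volume := by
    have hm : Measurable fun x => (∫⁻ h, F x h).toReal :=
      (hFmeas.lintegral_prod_right).ennreal_toReal
    refine (hm.aestronglyMeasurable).congr ?_
    filter_upwards [key1] with x hx
    rw [hx.2, ENNReal.toReal_ofReal hx.1]
  rw [integral_eq_lintegral_of_nonneg_ae hnn hmeasLHS, key3,
    ENNReal.toReal_ofReal hRHSnn]
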